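/- If P_T contains at most two vertices (i.e., the intersection of all longest paths of T is a single vertex or a single edge), then for every pair of vertices (u,v), the diameter of T ∪ {(u,v)} is at least diam(T); that is, the diameter of T cannot be decreased by adding a single shortcut edge. -/

import Mathlib

noncomputable section

open SimpleGraph

/-- The weight of a walk in a graph whose vertices are embedded in a metric space
via `f`: the sum of the metric distances along its edges. -/
def walkWeight {V : Type*} {X : Type*} [MetricSpace X] (G : SimpleGraph V) (f : V → X)
    {a b : V} (w : G.Walk a b) : ℝ :=
  (w.darts.map (fun e => dist (f e.fst) (f e.snd))).sum

/-- The shortest-path distance `δ_T(x,y)` in the tree `T = (G, f)`: since edge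
weights are nonnegative and the path between `x` and `y` in a tree is unique,
this equals the sum of the edge weights along that unique path. -/
def treeDist {V : Type*} {X : Type*} [MetricSpace X] (G : SimpleGraph V) (f : V → X)
    (x y : V) : ℝ :=
  sInf {r | ∃ w : G.Walk x y, r = walkWeight G f w}

/-- The diameter `diam(T) = max_{x,y} δ_T(x,y)`. -/
def treeDiam {V : Type*} {X : Type*} [MetricSpace X] (G : SimpleGraph V) (f : V → X) : ℝ :=
  sSup {r | ∃ x y : V, r = treeDist G f x y}

/-- The shortest-path distance between `x` and `y` in the augmented graph
`T ∪ {(u,v)}`, where the shortcut edge `(u,v)` has weight `d(f u, f v)`. -/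
def augDist {V : Type*} {X : Type*} [MetricSpace X] (G : SimpleGraph V) (f : V → X)
    (u v x y : V) : ℝ :=
  min (treeDist G f x y)
    (min (treeDist G f x u + dist (f u) (f v) + treeDist G f v y)
         (treeDist G f x v + dist (f u) (f v) + treeDist G f u y))

/-- The diameter of the augmented graph `T ∪ {(u,v)}`. -/
def augDiam {V : Type*} {X : Type*} [MetricSpace X] (G : SimpleGraph V) (f : V → X)
    (u v : V) : ℝ :=
  sSup {r | ∃ x y : V, r = augDist G f u v x y}

/-- A walk is a *longest path* of `T` if it is a path whose weight equals the
diameter of `T`. -/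
def IsLongestPath {V : Type*} {X : Type*} [MetricSpace X] (G : SimpleGraph V) (f : V → X)
    {a b : V} (w : G.Walk a b) : Prop :=
  w.IsPath ∧ walkWeight G f w = treeDiam G f

/-- `P_T`: the set of vertices of `T` that lie on every longest path of `T`. -/
def PT {V : Type*} {X : Type*} [MetricSpace X] (G : SimpleGraph V) (f : V → X) : Set V :=
  {z | ∀ (a b : V) (w : G.Walk a b), IsLongestPath G f w → z ∈ w.support}

namespace St17

variable {V : Type*} {X : Type*} [MetricSpace X] {G : SimpleGraph V}

/-- the unique path between two vertices of a tree -/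
def pth (hG : G.IsTree) (x y : V) : G.Walk x y :=
  (hG.existsUnique_path x y).exists.choose

lemma pth_isPath (hG : G.IsTree) (x y : V) : (pth hG x y).IsPath :=
  (hG.existsUnique_path x y).exists.choose_spec

lemma pth_unique (hG : G.IsTree) {x y : V} (p : G.Walk x y) (hp : p.IsPath) :
    p = pth hG x y :=
  (hG.existsUnique_path x y).unique hp (pth_isPath hG x y)

variable (f : V → X)

lemma ww_nil {x : V} : walkWeight G f (Walk.nil : G.Walk x x) = 0 := by
  simp [walkWeight]

lemma ww_cons {x y z : V} (h : G.Adj x y) (p : G.Walk y z) :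
    walkWeight G f (Walk.cons h p) = dist (f x) (f y) + walkWeight G f p := by
  simp [walkWeight, Walk.darts_cons]

lemma ww_append {x y z : V} (p : G.Walk x y) (q : G.Walk y z) :
    walkWeight G f (p.append q) = walkWeight G f p + walkWeight G f q := by
  simp [walkWeight, Walk.darts_append]

lemma ww_nonneg {x y : V} (p : G.Walk x y) : 0 ≤ walkWeight G f p := by
  apply List.sum_nonneg
  intro a ha
  obtain ⟨d, _, rfl⟩ := List.mem_map.1 ha
  exact dist_nonneg

lemma ww_reverse {x y : V} (p : G.Walk x y) :
    walkWeight G f p.reverse = walkWeight G f p := by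
  unfold walkWeight
  rw [Walk.darts_reverse, List.map_reverse, List.sum_reverse, List.map_map]
  congr 1
  apply List.map_congr_left
  intro d _
  exact dist_comm (f d.toProd.2) (f d.toProd.1)

lemma dist_le_ww {x y : V} (p : G.Walk x y) : dist (f x) (f y) ≤ walkWeight G f p := by
  induction p with
  | nil => simp [ww_nil]
  | cons h p ih =>
    rw [ww_cons]
    calc dist (f _) (f _) ≤ dist (f _) (f _) + dist (f _) (f _) := dist_triangle _ _ _
    _ ≤ _ := by linarith

lemma sum_map_le {α : Type*} (l₁ l₂ : List α) (g : α → ℝ) (h0 : ∀ a, 0 ≤ g a)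
    (hnd : l₁.Nodup) (hsub : l₁ ⊆ l₂) : (l₁.map g).sum ≤ (l₂.map g).sum := by
  classical
  rw [← List.sum_toFinset _ hnd]
  calc (l₁.toFinset.sum g) ≤ l₂.dedup.toFinset.sum g := by
        apply Finset.sum_le_sum_of_subset_of_nonneg
        · intro a ha
          simp only [List.mem_toFinset, List.mem_dedup] at *
          exact hsub ha
        · intro a _ _
          exact h0 a
  _ = (l₂.dedup.map g).sum := List.sum_toFinset _ l₂.nodup_dedup
  _ ≤ (l₂.map g).sum := by
        apply List.Sublist.sum_le_sum ((l₂.dedup_sublist).map g)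
        intro a ha
        obtain ⟨d, _, rfl⟩ := List.mem_map.1 ha
        exact h0 d

lemma ww_bypass_le [DecidableEq V] {x y : V} (p : G.Walk x y) :
    walkWeight G f p.bypass ≤ walkWeight G f p := by
  classical
  apply sum_map_le
  · intro a; exact dist_nonneg
  · exact Walk.darts_nodup_of_support_nodup p.bypass_isPath.support_nodup
  · exact p.darts_bypass_subset

/-- tree distance as weight of the unique path -/
def tdist (hG : G.IsTree) (x y : V) : ℝ := walkWeight G f (pth hG x y)

lemma ww_pth_le (hG : G.IsTree) {x y : V} (p : G.Walk x y) :
    tdist f hG x y ≤ walkWeight G f p := by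
  classical
  have h1 : p.bypass = pth hG x y := pth_unique hG _ p.bypass_isPath
  rw [tdist, ← h1]
  exact ww_bypass_le f p

lemma treeDist_eq (hG : G.IsTree) (x y : V) : treeDist G f x y = tdist f hG x y := by
  apply le_antisymm
  · exact csInf_le ⟨0, fun r ⟨p, hp⟩ => hp ▸ ww_nonneg f p⟩ ⟨pth hG x y, rfl⟩
  · exact le_csInf ⟨walkWeight G f (pth hG x y), ⟨pth hG x y, rfl⟩⟩
      (fun r ⟨p, hp⟩ => hp ▸ ww_pth_le f hG p)

end St17

namespace St17

variable {V : Type*} {X : Type*} [MetricSpace X] {G : SimpleGraph V} (f : V → X)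

lemma pth_nil (hG : G.IsTree) (x : V) : pth hG x x = Walk.nil :=
  (pth_unique hG Walk.nil (Walk.IsPath.nil)).symm

lemma tdist_self (hG : G.IsTree) (x : V) : tdist f hG x x = 0 := by
  rw [tdist, pth_nil, ww_nil]

lemma tdist_nonneg' (hG : G.IsTree) (x y : V) : 0 ≤ tdist f hG x y := ww_nonneg f _

lemma pth_reverse (hG : G.IsTree) (x y : V) : (pth hG x y).reverse = pth hG y x :=
  pth_unique hG _ (pth_isPath hG x y).reverse

lemma tdist_comm (hG : G.IsTree) (x y : V) : tdist f hG x y = tdist f hG y x := by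
  rw [tdist, tdist, ← pth_reverse hG x y, ww_reverse]

lemma mem_pth_symm (hG : G.IsTree) {x y z : V} :
    z ∈ (pth hG x y).support ↔ z ∈ (pth hG y x).support := by
  rw [← pth_reverse hG x y, Walk.support_reverse, List.mem_reverse]

lemma takeUntil_eq [DecidableEq V] (hG : G.IsTree) {x y c : V} (hc : c ∈ (pth hG x y).support) :
    (pth hG x y).takeUntil c hc = pth hG x c :=
  pth_unique hG _ ((pth_isPath hG x y).takeUntil hc)

lemma dropUntil_eq [DecidableEq V] (hG : G.IsTree) {x y c : V} (hc : c ∈ (pth hG x y).support) :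
    (pth hG x y).dropUntil c hc = pth hG c y :=
  pth_unique hG _ ((pth_isPath hG x y).dropUntil hc)

lemma pth_decomp (hG : G.IsTree) {x y c : V} (hc : c ∈ (pth hG x y).support) :
    pth hG x y = (pth hG x c).append (pth hG c y) := by
  classical
  have h := ((pth hG x y).take_spec hc).symm
  rwa [takeUntil_eq hG hc, dropUntil_eq hG hc] at h

lemma tdist_add_of_mem (hG : G.IsTree) {x y c : V} (hc : c ∈ (pth hG x y).support) :
    tdist f hG x c + tdist f hG c y = tdist f hG x y := by
  simp only [tdist]
  conv_rhs => rw [pth_decomp hG hc]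
  rw [ww_append]

lemma mem_sub_left (hG : G.IsTree) {x y c d : V} (hc : c ∈ (pth hG x y).support)
    (hd : d ∈ (pth hG x c).support) : d ∈ (pth hG x y).support := by
  rw [pth_decomp hG hc, Walk.mem_support_append_iff]
  exact Or.inl hd

lemma mem_sub_right (hG : G.IsTree) {x y c d : V} (hc : c ∈ (pth hG x y).support)
    (hd : d ∈ (pth hG c y).support) : d ∈ (pth hG x y).support := by
  rw [pth_decomp hG hc, Walk.mem_support_append_iff]
  exact Or.inr hd

lemma mem_dichot (hG : G.IsTree) {x y c d : V} (hc : c ∈ (pth hG x y).support)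
    (hd : d ∈ (pth hG x y).support) :
    d ∈ (pth hG x c).support ∨ d ∈ (pth hG c y).support := by
  rw [pth_decomp hG hc, Walk.mem_support_append_iff] at hd
  exact hd

lemma pth_len_decomp (hG : G.IsTree) {x y c : V} (hc : c ∈ (pth hG x y).support) :
    (pth hG x y).length = (pth hG x c).length + (pth hG c y).length := by
  conv_lhs => rw [pth_decomp hG hc]
  rw [Walk.length_append]

lemma ord_total (hG : G.IsTree) {x y c d : V} (hc : c ∈ (pth hG x y).support)
    (hd : d ∈ (pth hG x y).support) :
    d ∈ (pth hG c y).support ∨ c ∈ (pth hG d y).support := by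
  rcases mem_dichot hG hc hd with h | h
  · rcases mem_dichot hG hd hc with h2 | h2
    · have e1 : (pth hG x c).length = (pth hG x d).length + (pth hG d c).length :=
        pth_len_decomp hG h
      have e2 : (pth hG x d).length = (pth hG x c).length + (pth hG c d).length :=
        pth_len_decomp hG h2
      have e3 : (pth hG c d).length = 0 := by omega
      have e4 : c = d := Walk.eq_of_length_eq_zero e3
      subst e4
      exact Or.inl (Walk.start_mem_support _)
    · exact Or.inr h2
  · exact Or.inl h

/-- the union bound: every vertex of the path x→y is on path x→z or path z→y -/
lemma mem_union (hG : G.IsTree) {x y z c : V} (hc : c ∈ (pth hG x y).support) :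
    c ∈ (pth hG x z).support ∨ c ∈ (pth hG z y).support := by
  classical
  set W := (pth hG x z).append (pth hG z y) with hW
  have hb : W.bypass = pth hG x y := pth_unique hG _ W.bypass_isPath
  have : c ∈ W.support := W.support_bypass_subset (hb ▸ hc)
  rw [hW, Walk.mem_support_append_iff] at this
  exact this

lemma tdist_triangle (hG : G.IsTree) (x y z : V) :
    tdist f hG x z ≤ tdist f hG x y + tdist f hG y z := by
  have h := ww_pth_le f hG ((pth hG x y).append (pth hG y z))
  rwa [ww_append] at h

lemma isPath_append_left {x y z : V} {p : G.Walk x y} {q : G.Walk y z}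
    (h : (p.append q).IsPath) : p.IsPath := by
  have h2 := h.support_nodup
  rw [Walk.support_append] at h2
  exact Walk.IsPath.mk' h2.of_append_left

end St17

namespace St17

variable {V : Type*} {X : Type*} [MetricSpace X] {G : SimpleGraph V}

lemma takeUntil_eq' [DecidableEq V] (hG : G.IsTree) {z x c : V} {p : G.Walk z x}
    (hp : p.IsPath) (hc : c ∈ p.support) : p.takeUntil c hc = pth hG z c :=
  pth_unique hG _ (hp.takeUntil hc)

lemma pth_first_dart (hG : G.IsTree) {z x c : V} (p : G.Walk z x) (hp : p.IsPath)
    (hc : c ∈ p.support) (hne : c ≠ z) :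
    (pth hG z c).darts.head? = p.darts.head? := by
  classical
  have hts := p.take_spec hc
  have hdeq : (p.takeUntil c hc).darts ++ (p.dropUntil c hc).darts = p.darts := by
    rw [← Walk.darts_append, hts]
  have hlen : (p.takeUntil c hc).length ≠ 0 := by
    intro h0
    exact hne (Walk.eq_of_length_eq_zero h0).symm
  have hne' : (p.takeUntil c hc).darts ≠ [] := by
    intro h
    apply hlen
    rw [← Walk.length_darts, h]
    rfl
  obtain ⟨d, tl, hdtl⟩ := List.exists_cons_of_ne_nil hne'
  rw [← takeUntil_eq' hG hp hc, hdtl, ← hdeq, hdtl]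
  rfl

lemma med_helper (hG : G.IsTree) : ∀ (n : ℕ) (z x y : V) (p : G.Walk z x) (q : G.Walk z y),
    p.length ≤ n → p.IsPath → q.IsPath →
    ∃ m, m ∈ p.support ∧ m ∈ q.support ∧ m ∈ (pth hG x y).support := by
  intro n
  induction n with
  | zero =>
    intro z x y p q hl hp hq
    have h0 : p.length = 0 := Nat.le_zero.1 hl
    have hz : z = x := Walk.eq_of_length_eq_zero h0
    subst hz
    exact ⟨z, Walk.start_mem_support _, Walk.start_mem_support _, Walk.start_mem_support _⟩
  | succ n ih =>
    intro z x y p q hl hp hq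
    cases p with
    | nil =>
      exact ⟨z, Walk.start_mem_support _, Walk.start_mem_support _, Walk.start_mem_support _⟩
    | @cons _ w₁ _ hadj p₁ =>
      cases q with
      | nil =>
        exact ⟨z, Walk.start_mem_support _, Walk.start_mem_support _, Walk.end_mem_support _⟩
      | @cons _ w₂ _ hadj₂ q₁ =>
        by_cases hzz : w₁ = w₂
        · subst hzz
          obtain ⟨m, h1, h2, h3⟩ := ih w₁ x y p₁ q₁
            (by rw [Walk.length_cons] at hl; omega) hp.of_cons hq.of_cons
          refine ⟨m, ?_, ?_, h3⟩
          · rw [Walk.support_cons]; exact List.mem_cons_of_mem _ h1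
          · rw [Walk.support_cons]; exact List.mem_cons_of_mem _ h2
        · -- diverging first steps: z is the median
          set p : G.Walk z x := Walk.cons hadj p₁ with hpdef
          set q : G.Walk z y := Walk.cons hadj₂ q₁ with hqdef
          have hdisj : ∀ c, c ∈ p.support → c ∈ q.support → c = z := by
            intro c hcp hcq
            by_contra hne
            have hd1 := pth_first_dart hG p hp hcp hne
            have hd2 := pth_first_dart hG q hq hcq hne
            rw [hd2] at hd1
            have : (Walk.cons hadj₂ q₁).darts.head? =
                some (SimpleGraph.Dart.mk (z, w₂) hadj₂) := rfl
            rw [this] at hd1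
            have : (Walk.cons hadj p₁).darts.head? =
                some (SimpleGraph.Dart.mk (z, w₁) hadj) := rfl
            rw [this] at hd1
            have h5 := Option.some.inj hd1
            have h6 : w₂ = w₁ := congrArg (fun d => d.toProd.2) h5
            exact hzz h6.symm
          have hW : (p.reverse.append q).IsPath := by
            rw [Walk.isPath_def, Walk.support_append, List.nodup_append]
            refine ⟨hp.reverse.support_nodup, ?_, ?_⟩
            · have : q.support = z :: q₁.support := rfl
              rw [this]
              exact hq.of_cons.support_nodup
            · intro c hc1 d hc2 hcd
              subst d
              have hcp : c ∈ p.support := by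
                rwa [Walk.support_reverse, List.mem_reverse] at hc1
              have hcq1 : c ∈ q₁.support := by
                have : q.support = z :: q₁.support := rfl
                rw [this] at hc2
                exact hc2
              have hcz : c = z := hdisj c hcp (by
                have : q.support = z :: q₁.support := rfl
                rw [this]
                exact List.mem_cons_of_mem _ hcq1)
              subst hcz
              have := hq.support_nodup
              rw [show q.support = c :: q₁.support from rfl] at this
              exact (List.nodup_cons.1 this).1 hcq1
          have hWp : p.reverse.append q = pth hG x y := pth_unique hG _ hW
          refine ⟨z, Walk.start_mem_support _, Walk.start_mem_support _, ?_⟩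
          rw [← hWp, Walk.mem_support_append_iff]
          left
          rw [Walk.support_reverse, List.mem_reverse]
          exact Walk.start_mem_support _

lemma med_exists (hG : G.IsTree) (x y z : V) :
    ∃ m, m ∈ (pth hG x y).support ∧ m ∈ (pth hG x z).support ∧ m ∈ (pth hG y z).support :=
  med_helper hG (pth hG x y).length x y z (pth hG x y) (pth hG x z) le_rfl
    (pth_isPath hG x y) (pth_isPath hG x z)

end St17

namespace St17

variable {V : Type*} {X : Type*} [MetricSpace X] {G : SimpleGraph V} (f : V → X)

lemma tdist_dist_le (hG : G.IsTree) (x y : V) : dist (f x) (f y) ≤ tdist f hG x y :=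
  dist_le_ww f (pth hG x y)

lemma ww_eq_dist_of_length_one {x y : V} {p : G.Walk x y} (h : p.length = 1) :
    walkWeight G f p = dist (f x) (f y) := by
  cases p with
  | nil => simp at h
  | cons hadj p' =>
    rw [Walk.length_cons] at h
    have h0 : p'.length = 0 := by omega
    have he : _ = y := Walk.eq_of_length_eq_zero h0
    subst he
    have : p' = Walk.nil := Walk.nil_iff_eq_nil.1 (Walk.length_eq_zero_iff.1 h0)
    subst this
    rw [ww_cons, ww_nil]
    ring

lemma tdist_eq_dist_of_length_one (hG : G.IsTree) {x y : V}
    (h : (pth hG x y).length = 1) : tdist f hG x y = dist (f x) (f y) :=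
  ww_eq_dist_of_length_one f h

/-- the two-leg maximum lemma -/
lemma leg_max (hG : G.IsTree) {p p' c : V}
    (hM : tdist f hG p c = tdist f hG p' c) (hc : c ∈ (pth hG p p').support) (s : V) :
    tdist f hG p c + tdist f hG s c ≤ max (tdist f hG s p) (tdist f hG s p') := by
  obtain ⟨m, hm1, hm2, hm3⟩ := med_exists hG p p' s
  rcases mem_dichot hG hm1 hc with h | h
  · -- c on path p→m
    have e1 : tdist f hG p c + tdist f hG c m = tdist f hG p m := tdist_add_of_mem f hG h
    have e2 : tdist f hG p m + tdist f hG m s = tdist f hG p s := tdist_add_of_mem f hG hm2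
    have tri : tdist f hG s c ≤ tdist f hG s m + tdist f hG m c := tdist_triangle f hG s m c
    have c1 : tdist f hG s m = tdist f hG m s := tdist_comm f hG s m
    have c2 : tdist f hG m c = tdist f hG c m := tdist_comm f hG m c
    have c3 : tdist f hG s p = tdist f hG p s := tdist_comm f hG s p
    have : tdist f hG p c + tdist f hG s c ≤ tdist f hG s p := by linarith
    exact le_trans this (le_max_left _ _)
  · -- c on path m→p'
    have e1 : tdist f hG m c + tdist f hG c p' = tdist f hG m p' := tdist_add_of_mem f hG h
    have e2 : tdist f hG p' m + tdist f hG m s = tdist f hG p' s := tdist_add_of_mem f hG hm3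
    have tri : tdist f hG s c ≤ tdist f hG s m + tdist f hG m c := tdist_triangle f hG s m c
    have c1 : tdist f hG s m = tdist f hG m s := tdist_comm f hG s m
    have c2 : tdist f hG c p' = tdist f hG p' c := tdist_comm f hG c p'
    have c3 : tdist f hG s p' = tdist f hG p' s := tdist_comm f hG s p'
    have c4 : tdist f hG p' m = tdist f hG m p' := tdist_comm f hG p' m
    have : tdist f hG p c + tdist f hG s c ≤ tdist f hG s p' := by
      rw [hM]; linarith
    exact le_trans this (le_max_right _ _)

/-- subpath between two vertices of a path stays on the path -/
lemma pth_sub (hG : G.IsTree) {x y c d : V} (hc : c ∈ (pth hG x y).support)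
    (hd : d ∈ (pth hG x y).support) :
    ∀ z ∈ (pth hG c d).support, z ∈ (pth hG x y).support := by
  rcases ord_total hG hc hd with h | h
  · intro z hz
    exact mem_sub_right hG hc (mem_sub_left hG h hz)
  · intro z hz
    exact mem_sub_right hG hd (mem_sub_left hG h ((mem_pth_symm hG).1 hz))

lemma four_pt_aux (hG : G.IsTree) {x y z t m1 m2 : V}
    (a1 : m1 ∈ (pth hG x y).support) (a2 : m1 ∈ (pth hG x z).support)
    (a3 : m1 ∈ (pth hG y z).support)
    (b1 : m2 ∈ (pth hG x y).support) (b2 : m2 ∈ (pth hG x t).support)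
    (b3 : m2 ∈ (pth hG y t).support)
    (h : m2 ∈ (pth hG m1 y).support) :
    tdist f hG x y + tdist f hG z t ≤ tdist f hG x t + tdist f hG y z := by
  rcases mem_dichot hG b1 a1 with h2 | h2
  · -- m1 on path x→m2 : main case
    have e1 : tdist f hG x m1 + tdist f hG m1 m2 = tdist f hG x m2 := tdist_add_of_mem f hG h2
    have e2 : tdist f hG x m2 + tdist f hG m2 t = tdist f hG x t := tdist_add_of_mem f hG b2
    have e3 : tdist f hG y m1 + tdist f hG m1 z = tdist f hG y z := tdist_add_of_mem f hG a3
    have e4 : tdist f hG x m1 + tdist f hG m1 y = tdist f hG x y := tdist_add_of_mem f hG a1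
    have e5 : tdist f hG m1 m2 + tdist f hG m2 y = tdist f hG m1 y := tdist_add_of_mem f hG h
    have tri1 : tdist f hG z t ≤ tdist f hG z m1 + tdist f hG m1 t := tdist_triangle f hG _ _ _
    have tri2 : tdist f hG m1 t ≤ tdist f hG m1 m2 + tdist f hG m2 t := tdist_triangle f hG _ _ _
    have c1 : tdist f hG z m1 = tdist f hG m1 z := tdist_comm f hG _ _
    have c2 : tdist f hG m2 y = tdist f hG y m2 := tdist_comm f hG _ _
    have c3 : tdist f hG y m1 = tdist f hG m1 y := tdist_comm f hG _ _
    linarith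
  · -- degenerate : m1 ∈ path m2→y and m2 ∈ path m1→y forces m1 = m2
    have l1 : (pth hG m1 y).length = (pth hG m1 m2).length + (pth hG m2 y).length :=
      pth_len_decomp hG h
    have l2 : (pth hG m2 y).length = (pth hG m2 m1).length + (pth hG m1 y).length :=
      pth_len_decomp hG h2
    have l3 : (pth hG m1 m2).length = 0 := by omega
    have l4 : m1 = m2 := Walk.eq_of_length_eq_zero l3
    subst l4
    have e1 : tdist f hG x m1 + tdist f hG m1 y = tdist f hG x y := tdist_add_of_mem f hG a1
    have e2 : tdist f hG x m1 + tdist f hG m1 t = tdist f hG x t := tdist_add_of_mem f hG b2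
    have e3 : tdist f hG y m1 + tdist f hG m1 z = tdist f hG y z := tdist_add_of_mem f hG a3
    have tri1 : tdist f hG z t ≤ tdist f hG z m1 + tdist f hG m1 t := tdist_triangle f hG _ _ _
    have c1 : tdist f hG z m1 = tdist f hG m1 z := tdist_comm f hG _ _
    have c2 : tdist f hG y m1 = tdist f hG m1 y := tdist_comm f hG _ _
    linarith

lemma four_pt (hG : G.IsTree) (x y z t : V) :
    tdist f hG x y + tdist f hG z t ≤
      max (tdist f hG x z + tdist f hG y t) (tdist f hG x t + tdist f hG y z) := by
  obtain ⟨m1, a1, a2, a3⟩ := med_exists hG x y z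
  obtain ⟨m2, b1, b2, b3⟩ := med_exists hG x y t
  rcases ord_total hG a1 b1 with h | h
  · exact le_trans (four_pt_aux f hG a1 a2 a3 b1 b2 b3 h) (le_max_right _ _)
  · have := four_pt_aux f hG b1 b2 b3 a1 a2 a3 h
    have c1 : tdist f hG t z = tdist f hG z t := tdist_comm f hG _ _
    rw [c1] at this
    exact le_trans this (le_max_left _ _)

end St17

namespace St17

variable {V : Type*} {X : Type*} [MetricSpace X] {G : SimpleGraph V} (f : V → X)

lemma len_chain (hG : G.IsTree) {x y c d : V} (hc : c ∈ (pth hG x y).support)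
    (hd : d ∈ (pth hG c y).support) :
    (pth hG x d).length = (pth hG x c).length + (pth hG c d).length := by
  classical
  have hdec : ((pth hG x c).append (pth hG c d)).append
      (pth hG d y) = pth hG x y := by
    rw [← Walk.append_assoc]
    rw [← pth_decomp hG hd]
    exact (pth_decomp hG hc).symm
  have hpath : ((pth hG x c).append (pth hG c d)).IsPath := by
    have := pth_isPath hG x y
    rw [← hdec] at this
    exact isPath_append_left this
  have heq : (pth hG x c).append (pth hG c d) = pth hG x d := pth_unique hG _ hpath
  rw [← heq, Walk.length_append]

/-- no three vertices pairwise at distance D when all diameter pairs are improved -/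
lemma three_contra (hG : G.IsTree) {D : ℝ} {u v : V}
    (himp : ∀ x y : V, tdist f hG x y = D →
      tdist f hG x u + dist (f u) (f v) + tdist f hG v y < D ∨
      tdist f hG x v + dist (f u) (f v) + tdist f hG u y < D)
    {x1 x2 x3 : V} (h12 : tdist f hG x1 x2 = D) (h13 : tdist f hG x1 x3 = D)
    (h23 : tdist f hG x2 x3 = D) : False := by
  have hw : (0:ℝ) ≤ dist (f u) (f v) := dist_nonneg
  -- triangle sums
  have tu12 : D ≤ tdist f hG x1 u + tdist f hG u x2 := h12 ▸ tdist_triangle f hG x1 u x2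
  have tu13 : D ≤ tdist f hG x1 u + tdist f hG u x3 := h13 ▸ tdist_triangle f hG x1 u x3
  have tu23 : D ≤ tdist f hG x2 u + tdist f hG u x3 := h23 ▸ tdist_triangle f hG x2 u x3
  have tv12 : D ≤ tdist f hG x1 v + tdist f hG v x2 := h12 ▸ tdist_triangle f hG x1 v x2
  have tv13 : D ≤ tdist f hG x1 v + tdist f hG v x3 := h13 ▸ tdist_triangle f hG x1 v x3
  have tv23 : D ≤ tdist f hG x2 v + tdist f hG v x3 := h23 ▸ tdist_triangle f hG x2 v x3
  have cu1 : tdist f hG u x1 = tdist f hG x1 u := tdist_comm f hG _ _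
  have cu2 : tdist f hG u x2 = tdist f hG x2 u := tdist_comm f hG _ _
  have cu3 : tdist f hG u x3 = tdist f hG x3 u := tdist_comm f hG _ _
  have cv1 : tdist f hG v x1 = tdist f hG x1 v := tdist_comm f hG _ _
  have cv2 : tdist f hG v x2 = tdist f hG x2 v := tdist_comm f hG _ _
  have cv3 : tdist f hG v x3 = tdist f hG x3 v := tdist_comm f hG _ _
  have H12 := himp x1 x2 h12
  have H13 := himp x1 x3 h13
  have H23 := himp x2 x3 h23
  rw [cv2, cu2] at H12
  rw [cv3, cu3] at H13
  rw [cv3, cu3] at H23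
  rw [cu2] at tu12
  rw [cu3] at tu13 tu23
  rw [cv2] at tv12
  rw [cv3] at tv13 tv23
  rcases H12 with h | h <;> rcases H13 with h' | h' <;> rcases H23 with h'' | h'' <;>
    linarith

/-- construction of the merge vertex on one side -/
lemma side_pack [Fintype V] (hG : G.IsTree) {D : ℝ} (a b : V) (hab : tdist f hG a b = D)
    (hle : ∀ x y : V, tdist f hG x y ≤ D)
    (hLL : ∀ p p' : V, tdist f hG p b = D → tdist f hG p' b = D → tdist f hG p p' < D) :
    ∃ (c lstar : V) (m : ℝ),
      tdist f hG lstar b = D ∧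
      c ∈ (pth hG a b).support ∧
      (∀ l, tdist f hG l b = D → c ∈ (pth hG l b).support) ∧
      (∀ l, tdist f hG l b = D → tdist f hG l c = m) ∧
      tdist f hG a c = m ∧
      tdist f hG a lstar = 2*m ∧
      c ∈ (pth hG a lstar).support ∧
      (2*m < D ∨ (c = a ∧ ∀ l, tdist f hG l b = D → l = a)) := by
  classical
  by_cases hL2 : ∃ l : V, tdist f hG l b = D ∧ l ≠ a
  · -- nondegenerate
    obtain ⟨l₀, hl₀, hl₀a⟩ := hL2
    -- the merge point associated to an l
    have jspec : ∀ l : V, ∃ j, j ∈ (pth hG a l).support ∧ j ∈ (pth hG a b).support ∧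
        j ∈ (pth hG l b).support := fun l => med_exists hG a l b
    choose jf hj1 hj2 hj3 using jspec
    -- pick lstar maximizing the length of path a→(jf l)
    obtain ⟨lstar, hlsmem, hlsmax⟩ :=
      (Finset.univ.filter (fun l : V => tdist f hG l b = D ∧ l ≠ a)).exists_max_image
        (fun l => (pth hG a (jf l)).length)
        ⟨l₀, by simp [hl₀, hl₀a]⟩
    have hlstarL : tdist f hG lstar b = D := by
      simp only [Finset.mem_filter] at hlsmem
      exact hlsmem.2.1
    set c := jf lstar with hc
    have hc_ab : c ∈ (pth hG a b).support := hj2 lstar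
    -- key: c is on every path l → b  (for l in L)
    have hkey : ∀ l, tdist f hG l b = D → c ∈ (pth hG l b).support := by
      intro l hl
      by_cases hla : l = a
      · subst hla; exact hc_ab
      · have hmem : l ∈ Finset.univ.filter (fun l : V => tdist f hG l b = D ∧ l ≠ a) := by
          simp [hl, hla]
        have hmax := hlsmax l hmem
        rcases ord_total hG (hj2 l) hc_ab with h | h
        · -- c ∈ pth (jf l) b : then on pth l b
          exact mem_sub_right hG (hj3 l) h
        · -- jf l ∈ pth c b : length forces c = jf l
          have hlen : (pth hG a (jf l)).length =
              (pth hG a c).length + (pth hG c (jf l)).length := len_chain hG hc_ab h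
          have h0 : (pth hG c (jf l)).length = 0 := by omega
          have : c = jf l := Walk.eq_of_length_eq_zero h0
          rw [this]
          exact hj3 l
    -- uniform distance to c
    set m := tdist f hG a c with hm
    have hcb : tdist f hG a c + tdist f hG c b = D := by
      rw [tdist_add_of_mem f hG hc_ab]; exact hab
    have hunif : ∀ l, tdist f hG l b = D → tdist f hG l c = m := by
      intro l hl
      have h1 : tdist f hG l c + tdist f hG c b = D := by
        rw [tdist_add_of_mem f hG (hkey l hl)]; exact hl
      linarith
    refine ⟨c, lstar, m, hlstarL, hc_ab, hkey, hunif, rfl, ?_, hj1 lstar, ?_⟩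
    · -- tdist a lstar = 2m
      have h1 : tdist f hG a c + tdist f hG c lstar = tdist f hG a lstar :=
        tdist_add_of_mem f hG (hj1 lstar)
      have h2 : tdist f hG c lstar = tdist f hG lstar c := tdist_comm f hG _ _
      have h3 : tdist f hG lstar c = m := hunif lstar hlstarL
      linarith
    · -- 2m < D
      left
      have h1 : tdist f hG a c + tdist f hG c lstar = tdist f hG a lstar :=
        tdist_add_of_mem f hG (hj1 lstar)
      have h2 : tdist f hG c lstar = tdist f hG lstar c := tdist_comm f hG _ _
      have h3 : tdist f hG lstar c = m := hunif lstar hlstarL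
      have h4 : tdist f hG a lstar < D := hLL a lstar hab hlstarL
      linarith
  · -- degenerate: a is the only far endpoint on this side
    push_neg at hL2
    refine ⟨a, a, 0, hab, Walk.start_mem_support _, ?_, ?_, tdist_self f hG a, ?_, ?_, Or.inr ⟨rfl, hL2⟩⟩
    · intro l hl
      rw [hL2 l hl]
      exact Walk.start_mem_support _
    · intro l hl
      rw [hL2 l hl]
      exact tdist_self f hG a
    · rw [tdist_self f hG a]; ring
    · exact Walk.start_mem_support _

end St17

namespace St17

variable {V : Type*} {X : Type*} [MetricSpace X] {G : SimpleGraph V}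

lemma main_contra [Fintype V] (hG : G.IsTree) (f : V → X)
    (hPT : (PT G f).ncard ≤ 2) (u v : V) {D : ℝ}
    (hDdiam : treeDiam G f = D)
    (hle : ∀ x y : V, tdist f hG x y ≤ D)
    (himp : ∀ x y : V, tdist f hG x y = D →
      tdist f hG x u + dist (f u) (f v) + tdist f hG v y < D ∨
      tdist f hG x v + dist (f u) (f v) + tdist f hG u y < D)
    {a b : V} (hab : tdist f hG a b = D)
    (hor : tdist f hG a u + dist (f u) (f v) + tdist f hG v b < D) : False := by
  have hw : (0:ℝ) ≤ dist (f u) (f v) := dist_nonneg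
  have hD0 : (0:ℝ) ≤ D := by have h := hle u u; rwa [tdist_self] at h
  have hthree : ∀ x1 x2 x3 : V, tdist f hG x1 x2 = D → tdist f hG x1 x3 = D →
      tdist f hG x2 x3 = D → False := fun x1 x2 x3 h12 h13 h23 =>
    three_contra f hG himp h12 h13 h23
  -- every L-R pair is a diameter pair
  have hLR : ∀ p q, tdist f hG p b = D → tdist f hG a q = D → tdist f hG p q = D := by
    intro p q hp hq
    by_contra hne
    have h4 := four_pt f hG p b a q
    rw [hp, hq] at h4
    rcases le_max_iff.1 h4 with h | h
    · have h1 : tdist f hG p a ≤ D := hle _ _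
      have h2 : tdist f hG b q ≤ D := hle _ _
      have e1 : tdist f hG p a = D := by linarith
      exact hthree p a b e1 hp hab
    · have h1 : tdist f hG b a = D := by rw [tdist_comm f hG b a]; exact hab
      have h2 : tdist f hG p q ≤ D := hle _ _
      exact hne (by linarith)
  -- within-class distances are < D
  have hLL : ∀ p p', tdist f hG p b = D → tdist f hG p' b = D → tdist f hG p p' < D := by
    intro p p' hp hp'
    rcases lt_or_eq_of_le (hle p p') with h | h
    · exact h
    · exact (hthree p p' b h hp hp').elim
  have hRR' : ∀ q q', tdist f hG q a = D → tdist f hG q' a = D → tdist f hG q q' < D := by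
    intro q q' hq hq'
    rcases lt_or_eq_of_le (hle q q') with h | h
    · exact h
    · exact (hthree q q' a h hq hq').elim
  -- every diameter pair is an L-R pair
  have hclass : ∀ x y, tdist f hG x y = D →
      (tdist f hG x b = D ∧ tdist f hG a y = D) ∨
      (tdist f hG a x = D ∧ tdist f hG y b = D) := by
    intro x y hxy
    have h4 := four_pt f hG x y a b
    rw [hxy, hab] at h4
    have hxa := hle x a
    have hyb := hle y b
    have hxb := hle x b
    have hya := hle y a
    rcases le_max_iff.1 h4 with h | h
    · refine Or.inr ⟨?_, by linarith⟩
      rw [tdist_comm f hG a x]; linarith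
    · refine Or.inl ⟨by linarith, ?_⟩
      rw [tdist_comm f hG a y]; linarith
  -- side packs
  obtain ⟨c1, lstar, M1, hls_L, hc1_ab, hc1_all, hc1_unif, hM1a, hls2M, hc1_als, hM1half⟩ :=
    side_pack f hG a b hab hle hLL
  have hba : tdist f hG b a = D := by rw [tdist_comm f hG b a]; exact hab
  obtain ⟨c2, rstar, M2, hrs_R, hc2_ba, hc2_all, hc2_unif, hM2b, hrs2M, hc2_brs, hM2half⟩ :=
    side_pack f hG b a hba hle hRR'
  -- cross membership for c1
  have hcross1 : ∀ l r, tdist f hG l b = D → tdist f hG a r = D →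
      c1 ∈ (pth hG l r).support := by
    intro l r hl hr
    rcases mem_union hG (z := r) (hc1_all l hl) with h | h
    · exact h
    · rcases hM1half with hhalf | ⟨hc1a, hallL⟩
      · exfalso
        have e1 : tdist f hG r c1 + tdist f hG c1 b = tdist f hG r b :=
          tdist_add_of_mem f hG h
        have e2 : tdist f hG a c1 + tdist f hG c1 b = D := by
          rw [tdist_add_of_mem f hG hc1_ab]; exact hab
        have e3 : tdist f hG l r = D := hLR l r hl hr
        have tri : tdist f hG l r ≤ tdist f hG l c1 + tdist f hG c1 r :=
          tdist_triangle f hG l c1 r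
        have e4 : tdist f hG l c1 = M1 := hc1_unif l hl
        have e5 : tdist f hG c1 r = tdist f hG r c1 := tdist_comm f hG c1 r
        have e6 : tdist f hG r b ≤ D := hle _ _
        linarith
      · rw [hallL l hl, hc1a]
        exact Walk.start_mem_support _
  -- cross membership for c2
  have hcross2 : ∀ l r, tdist f hG l b = D → tdist f hG a r = D →
      c2 ∈ (pth hG l r).support := by
    intro l r hl hr
    have hr' : tdist f hG r a = D := by rw [tdist_comm f hG r a]; exact hr
    rcases hM2half with hhalf | ⟨hc2b, hallR⟩
    · rcases mem_union hG (z := l) (hc2_all r hr') with h | h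
      · exact (mem_pth_symm hG).1 h
      · exfalso
        have e1 : tdist f hG l c2 + tdist f hG c2 a = tdist f hG l a :=
          tdist_add_of_mem f hG h
        have e2 : tdist f hG b c2 + tdist f hG c2 a = D := by
          rw [tdist_add_of_mem f hG hc2_ba]; exact hba
        have e3 : tdist f hG l r = D := hLR l r hl hr
        have tri : tdist f hG l r ≤ tdist f hG l c2 + tdist f hG c2 r :=
          tdist_triangle f hG l c2 r
        have e4 : tdist f hG r c2 = M2 := hc2_unif r hr'
        have e5 : tdist f hG c2 r = tdist f hG r c2 := tdist_comm f hG c2 r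
        have e6 : tdist f hG l a ≤ D := hle _ _
        linarith [hM2b]
    · rw [hallR r hr', hc2b]
      exact Walk.end_mem_support _
  -- orientation propagation
  have hD_ars : tdist f hG a rstar = D := by rw [tdist_comm f hG a rstar]; exact hrs_R
  have hD_lsb : tdist f hG lstar b = D := hls_L
  have hD_lsrs : tdist f hG lstar rstar = D := hLR lstar rstar hls_L hD_ars
  have hor_ars : tdist f hG a u + dist (f u) (f v) + tdist f hG v rstar < D := by
    rcases himp a rstar hD_ars with h | h
    · exact h
    · exfalso
      have t1 : D ≤ tdist f hG a u + tdist f hG u rstar :=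
        hD_ars ▸ tdist_triangle f hG a u rstar
      have t2 : D ≤ tdist f hG a v + tdist f hG v b :=
        hab ▸ tdist_triangle f hG a v b
      linarith
  have hor_lsb : tdist f hG lstar u + dist (f u) (f v) + tdist f hG v b < D := by
    rcases himp lstar b hD_lsb with h | h
    · exact h
    · exfalso
      have t1 : D ≤ tdist f hG a u + tdist f hG u b := hab ▸ tdist_triangle f hG a u b
      have t2 : D ≤ tdist f hG lstar v + tdist f hG v b :=
        hD_lsb ▸ tdist_triangle f hG lstar v b
      linarith
  have hor_lsrs : tdist f hG lstar u + dist (f u) (f v) + tdist f hG v rstar < D := by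
    rcases himp lstar rstar hD_lsrs with h | h
    · exact h
    · exfalso
      have t1 : D ≤ tdist f hG lstar u + tdist f hG u rstar :=
        hD_lsrs ▸ tdist_triangle f hG lstar u rstar
      have t2 : D ≤ tdist f hG lstar v + tdist f hG v b :=
        hD_lsb ▸ tdist_triangle f hG lstar v b
      linarith
  -- the two leg maxima
  have hMeq1 : tdist f hG a c1 = tdist f hG lstar c1 := by
    rw [hM1a, hc1_unif lstar hls_L]
  have max1 := leg_max f hG hMeq1 hc1_als u
  have hMeq2 : tdist f hG b c2 = tdist f hG rstar c2 := by
    rw [hM2b, hc2_unif rstar (by rw [tdist_comm f hG rstar a]; exact hD_ars)]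
  have max2 := leg_max f hG hMeq2 hc2_brs v
  have hcua : tdist f hG u a = tdist f hG a u := tdist_comm f hG u a
  have hculs : tdist f hG u lstar = tdist f hG lstar u := tdist_comm f hG u lstar
  have hcomb : M1 + tdist f hG u c1 + dist (f u) (f v) + M2 + tdist f hG v c2 < D := by
    rcases le_max_iff.1 max1 with h1 | h1 <;> rcases le_max_iff.1 max2 with h2 | h2 <;>
      linarith [hM1a, hM2b]
  -- epsilon identity
  have hc2_ab : c2 ∈ (pth hG a b).support := (mem_pth_symm hG).1 hc2_ba
  have heps : M1 + tdist f hG c1 c2 + M2 = D := by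
    have e2 : tdist f hG a c1 + tdist f hG c1 b = D := by
      rw [tdist_add_of_mem f hG hc1_ab]; exact hab
    rcases ord_total hG hc1_ab hc2_ab with h | h
    · have e1 : tdist f hG c1 c2 + tdist f hG c2 b = tdist f hG c1 b :=
        tdist_add_of_mem f hG h
      have e3 : tdist f hG c2 b = M2 := by rw [tdist_comm f hG c2 b, hM2b]
      linarith [hM1a]
    · exfalso
      have e1 : tdist f hG c2 c1 + tdist f hG c1 b = tdist f hG c2 b :=
        tdist_add_of_mem f hG h
      have e3 : tdist f hG c2 b = M2 := by rw [tdist_comm f hG c2 b, hM2b]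
      have e4 : (0:ℝ) ≤ tdist f hG c2 c1 := tdist_nonneg' f hG c2 c1
      -- so M1 + M2 ≥ D
      rcases hM1half with h1 | ⟨hc1a, _⟩
      · rcases hM2half with h2 | ⟨hc2b, _⟩
        · linarith [hM1a]
        · -- c2 = b : M2 = 0, then M1 ≥ D contradicting 2M1 < D
          have hM20 : M2 = 0 := by rw [← hM2b, hc2b, tdist_self]
          linarith [hM1a]
      · -- c1 = a : M1 = 0
        have hM10 : M1 = 0 := by rw [← hM1a, hc1a, tdist_self]
        rcases hM2half with h2 | ⟨hc2b, _⟩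
        · linarith [hM1a]
        · -- both degenerate : D ≤ 0, contradiction with hor
          have hM20 : M2 = 0 := by rw [← hM2b, hc2b, tdist_self]
          have hDneg : D ≤ 0 := by linarith [hM1a]
          linarith [tdist_nonneg' f hG a u, tdist_nonneg' f hG v b]
  have hfin : tdist f hG u c1 + dist (f u) (f v) + tdist f hG v c2 <
      tdist f hG c1 c2 := by linarith
  -- every longest path contains the whole path c1–c2
  have hPTsub : ∀ z ∈ (pth hG c1 c2).support, z ∈ PT G f := by
    intro z hz a' b' W hW
    obtain ⟨hWpath, hWw⟩ := hW
    have hWeq : W = pth hG a' b' := pth_unique hG W hWpath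
    have hd : tdist f hG a' b' = D := by
      rw [hWeq] at hWw
      rw [tdist, hWw, hDdiam]
    rw [hWeq]
    rcases hclass a' b' hd with ⟨hl, hr⟩ | ⟨hr, hl⟩
    · exact pth_sub hG (hcross1 a' b' hl hr) (hcross2 a' b' hl hr) z hz
    · exact pth_sub hG ((mem_pth_symm hG).1 (hcross1 b' a' hl hr))
        ((mem_pth_symm hG).1 (hcross2 b' a' hl hr)) z hz
  -- cardinality forces the path c1–c2 to be a single edge
  classical
  have hfinPT : (PT G f).Finite := Set.toFinite _
  have hsub : {z | z ∈ (pth hG c1 c2).support} ⊆ PT G f := fun z hz => hPTsub z hz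
  have hn1 : ({z | z ∈ (pth hG c1 c2).support} : Set V).ncard ≤ 2 :=
    le_trans (Set.ncard_le_ncard hsub hfinPT) hPT
  have hset : ({z | z ∈ (pth hG c1 c2).support} : Set V) =
      ((pth hG c1 c2).support.toFinset : Set V) := by ext z; simp
  rw [hset, Set.ncard_coe_finset] at hn1
  have hcard : (pth hG c1 c2).support.toFinset.card = (pth hG c1 c2).support.length :=
    List.toFinset_card_of_nodup (pth_isPath hG c1 c2).support_nodup
  rw [hcard, Walk.length_support] at hn1
  have heps_pos : 0 < tdist f hG c1 c2 := by
    have h0 : (0:ℝ) ≤ tdist f hG u c1 + dist (f u) (f v) + tdist f hG v c2 := by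
      have := tdist_nonneg' f hG u c1
      have := tdist_nonneg' f hG v c2
      linarith
    linarith
  have hlen1 : (pth hG c1 c2).length = 1 := by
    have hne0 : (pth hG c1 c2).length ≠ 0 := by
      intro h0
      have hcc : c1 = c2 := Walk.eq_of_length_eq_zero h0
      rw [hcc, tdist_self] at heps_pos
      exact lt_irrefl _ heps_pos
    omega
  have hdist : tdist f hG c1 c2 = dist (f c1) (f c2) :=
    tdist_eq_dist_of_length_one f hG hlen1
  have htri := dist_triangle4 (f c1) (f u) (f v) (f c2)
  have hb1 : dist (f c1) (f u) ≤ tdist f hG c1 u := tdist_dist_le f hG c1 u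
  have hb2 : dist (f v) (f c2) ≤ tdist f hG v c2 := tdist_dist_le f hG v c2
  have hcm : tdist f hG c1 u = tdist f hG u c1 := tdist_comm f hG c1 u
  linarith

end St17

namespace St17

lemma main_theorem {V : Type*} [Fintype V] {X : Type*} [MetricSpace X]
    (G : SimpleGraph V) (hG : G.IsTree) (f : V → X)
    (hPT : (PT G f).ncard ≤ 2) :
    ∀ u v : V, treeDiam G f ≤ augDiam G f u v := by
  intro u v
  by_contra hlt'
  push_neg at hlt'
  set D := treeDiam G f with hDdef
  -- diameter set facts
  have hfinD : {r | ∃ x y : V, r = treeDist G f x y}.Finite := by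
    apply (Set.finite_range (fun p : V × V => treeDist G f p.1 p.2)).subset
    rintro r ⟨x, y, rfl⟩
    exact ⟨(x, y), rfl⟩
  have hle : ∀ x y : V, tdist f hG x y ≤ D := by
    intro x y
    rw [← treeDist_eq f hG]
    exact le_csSup hfinD.bddAbove ⟨x, y, rfl⟩
  have hDmem : D ∈ {r | ∃ x y : V, r = treeDist G f x y} :=
    Set.Nonempty.csSup_mem ⟨treeDist G f u u, u, u, rfl⟩ hfinD
  obtain ⟨a, b, habD⟩ := hDmem
  have hab : tdist f hG a b = D := by rw [← treeDist_eq f hG]; exact habD.symm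
  -- improvement facts
  have hfinA : {r | ∃ x y : V, r = augDist G f u v x y}.Finite := by
    apply (Set.finite_range (fun p : V × V => augDist G f u v p.1 p.2)).subset
    rintro r ⟨x, y, rfl⟩
    exact ⟨(x, y), rfl⟩
  have himp0 : ∀ x y : V, augDist G f u v x y < D := fun x y =>
    lt_of_le_of_lt (le_csSup hfinA.bddAbove ⟨x, y, rfl⟩) hlt'
  have himp : ∀ x y : V, tdist f hG x y = D →
      tdist f hG x u + dist (f u) (f v) + tdist f hG v y < D ∨
      tdist f hG x v + dist (f u) (f v) + tdist f hG u y < D := by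
    intro x y hxy
    have h := himp0 x y
    unfold augDist at h
    rw [treeDist_eq f hG, treeDist_eq f hG, treeDist_eq f hG, treeDist_eq f hG,
      treeDist_eq f hG] at h
    rcases min_lt_iff.1 h with h1 | h1
    · rw [hxy] at h1
      exact absurd h1 (lt_irrefl D)
    · exact min_lt_iff.1 h1
  rcases himp a b hab with h | h
  · exact main_contra hG f hPT u v hDdef.symm hle himp hab h
  · -- swap the roles of u and v
    have himp' : ∀ x y : V, tdist f hG x y = D →
        tdist f hG x v + dist (f v) (f u) + tdist f hG u y < D ∨
        tdist f hG x u + dist (f v) (f u) + tdist f hG v y < D := by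
      intro x y hxy
      rw [dist_comm (f v) (f u)]
      exact (himp x y hxy).symm
    have h' : tdist f hG a v + dist (f v) (f u) + tdist f hG u b < D := by
      rw [dist_comm (f v) (f u)]
      exact h
    exact main_contra hG f hPT v u hDdef.symm hle himp' hab h'

end St17


/-- If `P_T` contains at most two vertices (i.e., the intersection
of all longest paths of `T` is a single vertex or a single edge), then for every
pair of vertices `(u,v)`, the diameter of `T ∪ {(u,v)}` is at least `diam(T)`; that
is, the diameter of `T` cannot be decreased by adding a single shortcut edge. -/
theorem small_PT_no_improvement {V : Type*} [Fintype V] {X : Type*} [MetricSpace X]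
    (G : SimpleGraph V) (hG : G.IsTree) (f : V → X)
    (hPT : (PT G f).ncard ≤ 2) :
    ∀ u v : V, treeDiam G f ≤ augDiam G f u v := by
  exact fun u v => St17.main_theorem G hG f hPT u v
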